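/- Let F(x1,x2,x3) = (x1 − x2 + x3)^2 + x2^2 and let A be the 3×3 matrix with rows (1,0,1/3), (0,1,1/3), (0,0,1/3). Then for every m ≥ 1, F(A^m·(x1,x2,x3)^T) = x1^2 − 2 x1 x2 + (2/3^m) x1 x3 + 2 x2^2 + (1 − 3^{1−m}) x2 x3 + (1/4)(5/3^{2m} − 2/3^m + 1) x3^2. In particular the coefficient of x1 x2 equals −2 for all m, so F(A^m X) is never trivially positive. -/

import Mathlib

open MvPolynomial

lemma stmt_15_matpow (m : ℕ) :
    (!![(1:ℝ), 0, 1/3; 0, 1, 1/3; 0, 0, 1/3] ^ m)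
      = !![1, 0, (1 - (1/3)^m)/2; 0, 1, (1 - (1/3)^m)/2; 0, 0, (1/3)^m] := by
  induction m with
  | zero => simp [Matrix.one_fin_three]
  | succ n ih =>
      rw [pow_succ, ih]
      ext i j
      fin_cases i <;> fin_cases j <;>
        simp [Matrix.mul_apply, Fin.sum_univ_three, Matrix.vecHead, Matrix.vecTail] <;> ring

lemma stmt_15_main (m : ℕ) :
    (aeval (fun i => ∑ j, C ((!![(1:ℝ), 0, 1/3; 0, 1, 1/3; 0, 0, 1/3] ^ m) i j) * X j)
        ((X 0 - X 1 + X 2) ^ 2 + (X 1) ^ 2 : MvPolynomial (Fin 3) ℝ)) =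
      (X 0) ^ 2 - 2 * X 0 * X 1 + C (2 / 3 ^ m) * (X 0 * X 2) + 2 * (X 1) ^ 2
        + C (1 - 3 / 3 ^ m) * (X 1 * X 2)
        + C ((1/4) * (5 / 3 ^ (2 * m) - 2 / 3 ^ m + 1)) * (X 2) ^ 2 := by
  have hp : ((3:ℝ)^m) ≠ 0 := by positivity
  have h1 : (2 / 3 ^ m : ℝ) = 2 * (1/3)^m := by simp only [one_div, inv_pow]; field_simp
  have h2 : (1 - 3 / 3 ^ m : ℝ) = 2 * ((1 - (1/3)^m)/2) - 2 * (1/3)^m := by simp only [one_div, inv_pow]; field_simp; ring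
  have h3 : ((1/4) * (5 / 3 ^ (2*m) - 2 / 3 ^ m + 1) : ℝ)
      = ((1 - (1/3)^m)/2)^2 + ((1/3)^m)^2 := by
    rw [pow_mul]
    simp only [one_div, inv_pow]
    field_simp
    rw [show ((3:ℝ)^2)^m = (3^m)^2 from by rw [← pow_mul, ← pow_mul, Nat.mul_comm]]
    ring
  rw [h3, h1, h2, stmt_15_matpow]
  have e0 : (∑ j, C ((!![(1:ℝ), 0, (1 - (1/3)^m)/2; 0, 1, (1 - (1/3)^m)/2; 0, 0, (1/3)^m]) 0 j)
      * X j : MvPolynomial (Fin 3) ℝ) = X 0 + C ((1 - (1/3)^m)/2) * X 2 := by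
    simp [Fin.sum_univ_three]
  have e1 : (∑ j, C ((!![(1:ℝ), 0, (1 - (1/3)^m)/2; 0, 1, (1 - (1/3)^m)/2; 0, 0, (1/3)^m]) 1 j)
      * X j : MvPolynomial (Fin 3) ℝ) = X 1 + C ((1 - (1/3)^m)/2) * X 2 := by
    simp [Fin.sum_univ_three]
  have e2 : (∑ j, C ((!![(1:ℝ), 0, (1 - (1/3)^m)/2; 0, 1, (1 - (1/3)^m)/2; 0, 0, (1/3)^m]) 2 j)
      * X j : MvPolynomial (Fin 3) ℝ) = C ((1/3)^m) * X 2 := by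
    simp [Fin.sum_univ_three]
  simp only [map_add, map_sub, map_mul, map_pow, aeval_X, e0, e1, e2, C_add, C_sub, C_mul,
    C_pow, C_1, map_ofNat]
  ring

lemma stmt_15_coeff (a b c : ℝ) :
    coeff (Finsupp.single (0 : Fin 3) 1 + Finsupp.single 1 1)
      ((X 0) ^ 2 - 2 * X 0 * X 1 + C a * (X 0 * X 2) + 2 * (X 1) ^ 2
        + C b * (X 1 * X 2)
        + C c * (X 2) ^ 2 : MvPolynomial (Fin 3) ℝ) = -2 := by
  set d : Fin 3 →₀ ℕ := Finsupp.single (0 : Fin 3) 1 + Finsupp.single 1 1 with hd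
  have e01 : (X 0 * X 1 : MvPolynomial (Fin 3) ℝ) = monomial d 1 := by
    rw [hd, X, X, monomial_mul, one_mul]
  have e02 : (X 0 * X 2 : MvPolynomial (Fin 3) ℝ)
      = monomial (Finsupp.single 0 1 + Finsupp.single 2 1) 1 := by
    rw [X, X, monomial_mul, one_mul]
  have e12 : (X 1 * X 2 : MvPolynomial (Fin 3) ℝ)
      = monomial (Finsupp.single 1 1 + Finsupp.single 2 1) 1 := by
    rw [X, X, monomial_mul, one_mul]
  have n02 : (Finsupp.single (0:Fin 3) 1 + Finsupp.single 2 1) ≠ d := by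
    intro h; simpa [hd] using DFunLike.congr_fun h 1
  have n12 : (Finsupp.single (1:Fin 3) 1 + Finsupp.single 2 1) ≠ d := by
    intro h; simpa [hd] using DFunLike.congr_fun h 0
  have n0 : (Finsupp.single (0:Fin 3) 2) ≠ d := by
    intro h; simpa [hd] using DFunLike.congr_fun h 1
  have n1 : (Finsupp.single (1:Fin 3) 2) ≠ d := by
    intro h; simpa [hd] using DFunLike.congr_fun h 0
  have n2 : (Finsupp.single (2:Fin 3) 2) ≠ d := by
    intro h; simpa [hd] using DFunLike.congr_fun h 0
  rw [show (2 * X 0 * X 1 : MvPolynomial (Fin 3) ℝ) = C 2 * (X 0 * X 1) from by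
        rw [map_ofNat]; ring,
      show (2 * (X 1)^2 : MvPolynomial (Fin 3) ℝ) = C 2 * (X 1)^2 from by
        rw [map_ofNat]]
  simp only [coeff_add, coeff_sub, coeff_C_mul, e01, e02, e12, X_pow_eq_monomial,
    coeff_monomial, if_neg n02, if_neg n12, if_neg n0, if_neg n1, if_neg n2, if_pos rfl]
  norm_num

/-- Substituting `A^m` (with `A` the matrix with rows `(1,0,1/3)`, `(0,1,1/3)`,
`(0,0,1/3)`) into `F = (x₁ - x₂ + x₃)² + x₂²` yields the displayed form; in
particular the coefficient of `x₁x₂` is `-2` for all `m`, so the result is never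
trivially positive. -/
theorem stmt_15 (m : ℕ) (hm : 1 ≤ m) :
    (aeval (fun i => ∑ j, C ((!![(1:ℝ), 0, 1/3; 0, 1, 1/3; 0, 0, 1/3] ^ m) i j) * X j)
        ((X 0 - X 1 + X 2) ^ 2 + (X 1) ^ 2 : MvPolynomial (Fin 3) ℝ)) =
      (X 0) ^ 2 - 2 * X 0 * X 1 + C (2 / 3 ^ m) * (X 0 * X 2) + 2 * (X 1) ^ 2
        + C (1 - 3 / 3 ^ m) * (X 1 * X 2)
        + C ((1/4) * (5 / 3 ^ (2 * m) - 2 / 3 ^ m + 1)) * (X 2) ^ 2 ∧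
      coeff (Finsupp.single (0 : Fin 3) 1 + Finsupp.single 1 1)
        (aeval (fun i => ∑ j, C ((!![(1:ℝ), 0, 1/3; 0, 1, 1/3; 0, 0, 1/3] ^ m) i j) * X j)
          ((X 0 - X 1 + X 2) ^ 2 + (X 1) ^ 2 : MvPolynomial (Fin 3) ℝ)) = -2 ∧
      ¬ (∀ α : Fin 3 →₀ ℕ, 0 ≤ coeff α
          (aeval (fun i => ∑ j, C ((!![(1:ℝ), 0, 1/3; 0, 1, 1/3; 0, 0, 1/3] ^ m) i j) * X j)
            ((X 0 - X 1 + X 2) ^ 2 + (X 1) ^ 2 : MvPolynomial (Fin 3) ℝ))) := by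
  have hcoeff : coeff (Finsupp.single (0 : Fin 3) 1 + Finsupp.single 1 1)
      (aeval (fun i => ∑ j, C ((!![(1:ℝ), 0, 1/3; 0, 1, 1/3; 0, 0, 1/3] ^ m) i j) * X j)
        ((X 0 - X 1 + X 2) ^ 2 + (X 1) ^ 2 : MvPolynomial (Fin 3) ℝ)) = -2 := by
    rw [stmt_15_main m]
    exact stmt_15_coeff _ _ _
  refine ⟨stmt_15_main m, hcoeff, fun h => ?_⟩
  have := h (Finsupp.single (0 : Fin 3) 1 + Finsupp.single 1 1)
  rw [hcoeff] at this
  linarith
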